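/- Let α ∈ ℝ, γ a positive semidefinite complex q×q matrix, and μ a finite positive semidefinite q×q matrix measure on [α,∞). Define F(z) = γ + ∫_{[α,∞)} (1+t-α)/(t-z) dμ(t). Then for every z, w ∈ ℂ \ [α,∞) one has F(z)* = F(z̄), and the null space of F(z) equals the intersection of the null space of γ with the null space of μ([α,∞)); in particular the null space and column space of F(z) do not depend on z. -/

import Mathlib

open Matrix Complex MeasureTheory Filter
open scoped ComplexOrder

/-- The "imaginary part" of a complex square matrix: `Im M = (M - M*)/(2i)`. -/
noncomputable def mIm {q : ℕ} (M : Matrix (Fin q) (Fin q) ℂ) : Matrix (Fin q) (Fin q) ℂ :=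
  ((2 : ℂ) * Complex.I)⁻¹ • (M - Mᴴ)

/-- The "real part" of a complex square matrix: `Re M = (M + M*)/2`. -/
noncomputable def mRe {q : ℕ} (M : Matrix (Fin q) (Fin q) ℂ) : Matrix (Fin q) (Fin q) ℂ :=
  ((2 : ℂ))⁻¹ • (M + Mᴴ)

section Aux

lemma aux_range_orth {q : ℕ} (f : EuclideanSpace ℂ (Fin q) →ₗ[ℂ] EuclideanSpace ℂ (Fin q)) :
    LinearMap.range f = (LinearMap.ker (LinearMap.adjoint f))ᗮ := by
  rw [← Submodule.orthogonal_orthogonal (LinearMap.range f)]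
  congr 1
  ext u
  simp only [Submodule.mem_orthogonal, LinearMap.mem_ker, SetLike.mem_coe, LinearMap.mem_range]
  constructor
  · intro h
    have h2 := h (f (LinearMap.adjoint f u)) ⟨_, rfl⟩
    rw [← LinearMap.adjoint_inner_right] at h2
    exact inner_self_eq_zero.mp h2
  · rintro h v ⟨w, rfl⟩
    rw [← LinearMap.adjoint_inner_right, h, inner_zero_right]

lemma aux_range_of_ker {q : ℕ} (M N : Matrix (Fin q) (Fin q) ℂ)
    (h : LinearMap.ker Mᴴ.mulVecLin = LinearMap.ker Nᴴ.mulVecLin) :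
    LinearMap.range M.mulVecLin = LinearMap.range N.mulVecLin := by
  have hker : ∀ P : Matrix (Fin q) (Fin q) ℂ, ∀ v : EuclideanSpace ℂ (Fin q),
      v ∈ LinearMap.ker (Matrix.toEuclideanLin P) ↔
      (WithLp.equiv 2 (Fin q → ℂ)) v ∈ LinearMap.ker P.mulVecLin := by
    intro P v
    simp only [LinearMap.mem_ker, Matrix.toEuclideanLin_apply, Matrix.mulVecLin_apply]
    constructor
    · intro hv
      have := congrArg (WithLp.equiv 2 (Fin q → ℂ)) hv
      simpa using this
    · intro hv; simpa using hv
  have hkerE : LinearMap.ker (Matrix.toEuclideanLin Mᴴ)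
      = LinearMap.ker (Matrix.toEuclideanLin Nᴴ) := by
    ext v; rw [hker, hker, h]
  have hrangeE : LinearMap.range (Matrix.toEuclideanLin M)
      = LinearMap.range (Matrix.toEuclideanLin N) := by
    rw [aux_range_orth, aux_range_orth, ← Matrix.toEuclideanLin_conjTranspose_eq_adjoint,
      ← Matrix.toEuclideanLin_conjTranspose_eq_adjoint, hkerE]
  ext w
  have hr : ∀ P : Matrix (Fin q) (Fin q) ℂ,
      (w ∈ LinearMap.range P.mulVecLin ↔
      (WithLp.equiv 2 (Fin q → ℂ)).symm w ∈ LinearMap.range (Matrix.toEuclideanLin P)) := by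
    intro P
    simp only [LinearMap.mem_range, Matrix.mulVecLin_apply, Matrix.toEuclideanLin_apply]
    constructor
    · rintro ⟨v, rfl⟩
      exact ⟨(WithLp.equiv 2 (Fin q → ℂ)).symm v, by simp⟩
    · rintro ⟨v, hv⟩
      refine ⟨WithLp.equiv 2 (Fin q → ℂ) v, ?_⟩
      have := congrArg (WithLp.equiv 2 (Fin q → ℂ)) hv
      simpa using this
  rw [hr, hr, hrangeE]

variable {q : ℕ} (τ : Measure ℝ) (d : ℝ → Matrix (Fin q) (Fin q) ℂ) (φ : ℝ → ℂ) (u : Fin q → ℂ)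

lemma aux_int_row (hint : ∀ j k, Integrable (fun t => φ t * d t j k) τ) (j : Fin q) :
    Integrable (fun t => φ t * (d t *ᵥ u) j) τ := by
  have : (fun t => φ t * (d t *ᵥ u) j) = fun t => ∑ k, (φ t * d t j k) * u k := by
    funext t
    simp [mulVec, dotProduct, Finset.mul_sum, mul_assoc]
  rw [this]
  exact integrable_finset_sum _ fun k _ => (hint j k).mul_const _

lemma aux_int_quad (hint : ∀ j k, Integrable (fun t => φ t * d t j k) τ) :
    Integrable (fun t => φ t * (star u ⬝ᵥ (d t *ᵥ u))) τ := by
  have : (fun t => φ t * (star u ⬝ᵥ (d t *ᵥ u)))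
      = fun t => ∑ j, star (u j) * (φ t * (d t *ᵥ u) j) := by
    funext t
    simp only [dotProduct, Pi.star_apply, Finset.mul_sum]
    exact Finset.sum_congr rfl fun j _ => by ring
  rw [this]
  exact integrable_finset_sum _ fun j _ => (aux_int_row τ d φ u hint j).const_mul _

lemma aux_mulVec (hint : ∀ j k, Integrable (fun t => φ t * d t j k) τ) :
    ((Matrix.of fun j k => ∫ t, φ t * d t j k ∂τ) *ᵥ u)
      = fun j => ∫ t, φ t * (d t *ᵥ u) j ∂τ := by
  funext j
  have h1 : ((Matrix.of fun j k => ∫ t, φ t * d t j k ∂τ) *ᵥ u) j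
      = ∑ k, (∫ t, (φ t * d t j k) * u k ∂τ) := by
    simp only [mulVec, dotProduct, Matrix.of_apply]
    exact Finset.sum_congr rfl fun k _ => (integral_mul_const _ _).symm
  rw [h1, ← integral_finset_sum _ fun k _ => (hint j k).mul_const _]
  congr 1; funext t
  simp [mulVec, dotProduct, Finset.mul_sum, mul_assoc]

lemma aux_dot (hint : ∀ j k, Integrable (fun t => φ t * d t j k) τ) :
    star u ⬝ᵥ ((Matrix.of fun j k => ∫ t, φ t * d t j k ∂τ) *ᵥ u)
      = ∫ t, φ t * (star u ⬝ᵥ (d t *ᵥ u)) ∂τ := by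
  rw [aux_mulVec τ d φ u hint]
  have h1 : star u ⬝ᵥ (fun j => ∫ t, φ t * (d t *ᵥ u) j ∂τ)
      = ∑ j, ∫ t, star (u j) * (φ t * (d t *ᵥ u) j) ∂τ := by
    simp only [dotProduct, Pi.star_apply]
    exact Finset.sum_congr rfl fun j _ => (integral_const_mul _ _).symm
  rw [h1, ← integral_finset_sum _ fun j _ => (aux_int_row τ d φ u hint j).const_mul _]
  congr 1; funext t
  simp only [dotProduct, Pi.star_apply, Finset.mul_sum]
  exact (Finset.sum_congr rfl fun j _ => by ring).symm

lemma aux_lb (α : ℝ) (z : ℂ) (hz : ∀ t : ℝ, α ≤ t → z ≠ (t : ℂ)) :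
    ∃ c > 0, ∀ t : ℝ, α ≤ t → c ≤ ‖(t:ℂ) - z‖ := by
  rcases eq_or_ne z.im 0 with him | him
  · have hzr : z = ((z.re : ℝ) : ℂ) := by
      apply Complex.ext <;> simp [him]
    have hlt : z.re < α := by
      by_contra hge
      exact hz z.re (le_of_not_gt hge) hzr
    refine ⟨α - z.re, by linarith, fun t ht => ?_⟩
    have h2 : (t:ℂ) - z = ((t - z.re : ℝ) : ℂ) := by
      rw [hzr]; push_cast; simp
    rw [h2, Complex.norm_real, Real.norm_eq_abs, _root_.abs_of_nonneg (by linarith : (0:ℝ) ≤ t - z.re)]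
    linarith
  · refine ⟨|z.im|, abs_pos.mpr him, fun t ht => ?_⟩
    calc |z.im| = |((t:ℂ) - z).im| := by simp
    _ ≤ ‖(t:ℂ) - z‖ := Complex.abs_im_le_norm _

lemma aux_f_meas (α : ℝ) (z : ℂ) :
    Measurable (fun t : ℝ => ((1 + t - α : ℝ) : ℂ) / ((t:ℂ) - z)) := by
  apply Measurable.div
  · exact Complex.measurable_ofReal.comp (by fun_prop)
  · exact (Complex.measurable_ofReal.sub measurable_const)

lemma aux_f_bound (α : ℝ) (z : ℂ) (c : ℝ) (hc : 0 < c)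
    (hlb : ∀ t : ℝ, α ≤ t → c ≤ ‖(t:ℂ) - z‖) (t : ℝ) (ht : α ≤ t) :
    ‖((1 + t - α : ℝ) : ℂ) / ((t:ℂ) - z)‖ ≤ 1 + ‖1 - α + z‖ / c := by
  have hne : (t:ℂ) - z ≠ 0 := by
    intro h0
    have := hlb t ht
    rw [h0] at this; simp at this; linarith
  have hsplit : ((1 + t - α : ℝ) : ℂ) / ((t:ℂ) - z) = 1 + (1 - (α:ℂ) + z) / ((t:ℂ) - z) := by
    field_simp
    push_cast
    ring
  rw [hsplit]
  calc ‖1 + (1 - (α:ℂ) + z) / ((t:ℂ) - z)‖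
      ≤ ‖(1:ℂ)‖ + ‖(1 - (α:ℂ) + z) / ((t:ℂ) - z)‖ := norm_add_le _ _
    _ = 1 + ‖1 - (α:ℂ) + z‖ / ‖(t:ℂ) - z‖ := by
        rw [norm_one, norm_div]
    _ ≤ 1 + ‖1 - α + z‖ / c := by
        have h3 := hlb t ht
        gcongr

end Aux

lemma aux_ker {q : ℕ} (α : ℝ) (γ : Matrix (Fin q) (Fin q) ℂ) (hγ : γ.PosSemidef)
    (τ : Measure ℝ) [IsFiniteMeasure τ] (hτ : τ (Set.Iio α) = 0)
    (d : ℝ → Matrix (Fin q) (Fin q) ℂ)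
    (hdmeas : ∀ j k : Fin q, Measurable fun t => d t j k)
    (hdpsd : ∀ t, (d t).PosSemidef)
    (hdint : ∀ j k, Integrable (fun t => d t j k) τ)
    (z : ℂ) (hz : ∀ t : ℝ, α ≤ t → z ≠ (t : ℂ)) :
    LinearMap.ker (γ + Matrix.of fun j k =>
        ∫ t, ((1 + t - α : ℝ) : ℂ) / ((t : ℂ) - z) * d t j k ∂τ).mulVecLin =
      LinearMap.ker γ.mulVecLin ⊓
        LinearMap.ker (Matrix.of fun j k => ∫ t, d t j k ∂τ :
          Matrix (Fin q) (Fin q) ℂ).mulVecLin := by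
  set f : ℝ → ℂ := fun t => ((1 + t - α : ℝ) : ℂ) / ((t:ℂ) - z) with hf_def
  obtain ⟨c, hc, hlb⟩ := aux_lb α z hz
  have hae : ∀ᵐ t ∂τ, α ≤ t := by
    rw [ae_iff]
    convert hτ using 2
    ext t; simp [not_le]
  -- integrability of f * d j k
  have h_fd : ∀ j k, Integrable (fun t => f t * d t j k) τ := by
    intro j k
    apply (hdint j k).bdd_mul ((aux_f_meas α z).aestronglyMeasurable)
    filter_upwards [hae] with t ht
    exact aux_f_bound α z c hc hlb t ht
  have h_1d : ∀ j k, Integrable (fun t => (1:ℂ) * d t j k) τ := by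
    intro j k; simpa using hdint j k
  have hDeq : (Matrix.of fun j k => ∫ t, d t j k ∂τ : Matrix (Fin q) (Fin q) ℂ)
      = Matrix.of fun j k => ∫ t, (1:ℂ) * d t j k ∂τ := by
    ext j k; simp
  ext u
  simp only [Submodule.mem_inf, LinearMap.mem_ker, Matrix.mulVecLin_apply]
  -- abbreviations
  set g : ℝ → ℂ := fun t => star u ⬝ᵥ (d t *ᵥ u) with hg_def
  set gr : ℝ → ℝ := fun t => (g t).re with hgr_def
  have hgre : ∀ t, g t = ((gr t : ℝ) : ℂ) := by
    intro t
    have h := (hdpsd t).dotProduct_mulVec_nonneg u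
    rw [Complex.nonneg_iff] at h
    apply Complex.ext
    · rfl
    · show (star u ⬝ᵥ (d t *ᵥ u)).im = ((gr t : ℝ) : ℂ).im
      simp [← h.2]
  have hgrnn : ∀ t, 0 ≤ gr t := by
    intro t
    have h := (hdpsd t).dotProduct_mulVec_nonneg u
    rw [Complex.nonneg_iff] at h
    exact h.1
  have hg_int : Integrable g τ := by
    have := aux_int_quad τ d (fun _ => (1:ℂ)) u h_1d
    simpa [hg_def] using this
  have hgr_int : Integrable gr τ := by
    have := hg_int.re
    simpa [hgr_def] using this
  -- shared consequences of gr =ᵐ 0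
  have shared : (∀ᵐ t ∂τ, gr t = 0) →
      ((Matrix.of fun j k => ∫ t, f t * d t j k ∂τ) *ᵥ u = 0
        ∧ (Matrix.of fun j k => ∫ t, d t j k ∂τ : Matrix (Fin q) (Fin q) ℂ) *ᵥ u = 0) := by
    intro hgr0
    have hdu0 : ∀ᵐ t ∂τ, d t *ᵥ u = 0 := by
      filter_upwards [hgr0] with t ht
      apply ((hdpsd t).dotProduct_mulVec_zero_iff u).mp
      show g t = 0
      rw [hgre t, ht]
      simp
    constructor
    · rw [aux_mulVec τ d f u h_fd]
      funext j
      have : ∀ᵐ t ∂τ, f t * (d t *ᵥ u) j = 0 := by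
        filter_upwards [hdu0] with t ht
        rw [ht]; simp
      simpa using integral_eq_zero_of_ae this
    · rw [hDeq, aux_mulVec τ d (fun _ => 1) u h_1d]
      funext j
      have : ∀ᵐ t ∂τ, (1:ℂ) * (d t *ᵥ u) j = 0 := by
        filter_upwards [hdu0] with t ht
        rw [ht]; simp
      simpa using integral_eq_zero_of_ae this
  constructor
  · -- hard direction
    intro hFu
    have hquad : star u ⬝ᵥ (γ *ᵥ u) + ∫ t, f t * g t ∂τ = 0 := by
      have h0 := congrArg (fun v => star u ⬝ᵥ v) hFu
      simp only [Matrix.add_mulVec, dotProduct_add, dotProduct_zero] at h0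
      rw [aux_dot τ d f u h_fd] at h0
      exact h0
    have hA := hγ.dotProduct_mulVec_nonneg u
    have hAre : star u ⬝ᵥ (γ *ᵥ u) = (((star u ⬝ᵥ (γ *ᵥ u)).re : ℝ) : ℂ) := by
      rw [Complex.nonneg_iff] at hA
      apply Complex.ext
      · simp
      · simp [← hA.2]
    have hArnn : 0 ≤ (star u ⬝ᵥ (γ *ᵥ u)).re := by
      rw [Complex.nonneg_iff] at hA; exact hA.1
    have hfg_int : Integrable (fun t => f t * g t) τ := aux_int_quad τ d f u h_fd
    -- establish gr =ᵐ 0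
    have hgr0 : ∀ᵐ t ∂τ, gr t = 0 := by
      by_cases him : z.im = 0
      · -- real case
        have hzr : z = ((z.re : ℝ) : ℂ) := by apply Complex.ext <;> simp [him]
        have hlt : z.re < α := by
          by_contra hge
          exact hz z.re (le_of_not_gt hge) hzr
        set χ : ℝ → ℝ := fun t => (1 + t - α) / (t - z.re) with hχ_def
        have hfreal : ∀ t, f t = ((χ t : ℝ) : ℂ) := by
          intro t
          rw [hf_def]
          simp only [hχ_def]
          rw [hzr]
          push_cast
          rfl
        have hfg : ∀ t, f t * g t = ((χ t * gr t : ℝ) : ℂ) := by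
          intro t
          rw [hfreal t, hgre t]
          push_cast
          ring
        have hint_eq : (∫ t, f t * g t ∂τ) = (((∫ t, χ t * gr t ∂τ : ℝ)) : ℂ) := by
          rw [show (fun t => f t * g t) = fun t => ((χ t * gr t : ℝ) : ℂ) from funext hfg]
          exact integral_ofReal
        have hquad2 : (star u ⬝ᵥ (γ *ᵥ u)).re + ∫ t, χ t * gr t ∂τ = 0 := by
          have := hquad
          rw [hint_eq, hAre] at this
          exact_mod_cast this
        have hχgr_int : Integrable (fun t => χ t * gr t) τ := by
          have h2 := hfg_int.re
          have : (fun t => ((f t * g t).re)) = fun t => χ t * gr t := by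
            funext t; rw [hfg t]; simp
          rwa [← this]
        have hnn : ∀ᵐ t ∂τ, 0 ≤ χ t * gr t := by
          filter_upwards [hae] with t ht
          apply mul_nonneg
          · apply div_nonneg <;> linarith
          · exact hgrnn t
        have hIr_nn : 0 ≤ ∫ t, χ t * gr t ∂τ := integral_nonneg_of_ae hnn
        have hIr0 : ∫ t, χ t * gr t ∂τ = 0 := by linarith
        have hχgr0 : ∀ᵐ t ∂τ, χ t * gr t = 0 :=
          (integral_eq_zero_iff_of_nonneg_ae hnn hχgr_int).mp hIr0
        filter_upwards [hχgr0, hae] with t ht hta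
        have hχpos : 0 < χ t := by
          apply div_pos <;> linarith
        rcases mul_eq_zero.mp ht with h | h
        · exact absurd h (ne_of_gt hχpos)
        · exact h
      · -- non-real case
        set ψ : ℝ → ℝ := fun t => (1 + t - α) / Complex.normSq ((t:ℂ) - z) * gr t with hψ_def
        have hfim : ∀ t, (f t).im = (1 + t - α) * (z.im / Complex.normSq ((t:ℂ) - z)) := by
          intro t
          simp only [hf_def, div_eq_mul_inv, Complex.mul_im, Complex.inv_im,
            Complex.inv_re, Complex.sub_im, Complex.sub_re, Complex.ofReal_im,
            Complex.ofReal_re, Complex.ofReal_im, neg_div]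
          ring
        have him_eq : ∀ t, (f t * g t).im = z.im * ψ t := by
          intro t
          rw [hgre t, Complex.mul_im]
          simp only [Complex.ofReal_re, Complex.ofReal_im, mul_zero, zero_add]
          rw [hfim t, hψ_def]
          ring
        have hIm0 : (∫ t, f t * g t ∂τ).im = 0 := by
          have := congrArg Complex.im hquad
          rw [Complex.add_im, hAre] at this
          simpa using this
        have hintim : ∫ t, (f t * g t).im ∂τ = 0 := by
          have h2 := integral_im hfg_int
          simp only [RCLike.im_to_complex] at h2
          rw [h2, hIm0]
        have hψ_int : Integrable ψ τ := by
          have h2 : ψ = fun t => z.im⁻¹ * (f t * g t).im := by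
            funext t
            rw [him_eq t]
            field_simp
          rw [h2]
          exact (hfg_int.im.congr (by simp)).const_mul _
        have hintψ : ∫ t, ψ t ∂τ = 0 := by
          have h3 : ∫ t, (f t * g t).im ∂τ = z.im * ∫ t, ψ t ∂τ := by
            rw [← integral_const_mul]
            exact integral_congr_ae (Eventually.of_forall fun t => him_eq t)
          rw [h3] at hintim
          exact (mul_eq_zero.mp hintim).resolve_left him
        have hnn : ∀ᵐ t ∂τ, 0 ≤ ψ t := by
          filter_upwards [hae] with t ht
          apply mul_nonneg
          · apply div_nonneg
            · linarith
            · exact Complex.normSq_nonneg _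
          · exact hgrnn t
        have hψ0 : ∀ᵐ t ∂τ, ψ t = 0 :=
          (integral_eq_zero_iff_of_nonneg_ae hnn hψ_int).mp hintψ
        filter_upwards [hψ0, hae] with t ht hta
        have hne : ((t:ℂ) - z) ≠ 0 := by
          intro h0
          have := hlb t hta
          rw [h0] at this; simp at this; linarith
        have hpos : 0 < (1 + t - α) / Complex.normSq ((t:ℂ) - z) := by
          apply div_pos
          · linarith
          · exact Complex.normSq_pos.mpr hne
        rcases mul_eq_zero.mp ht with h | h
        · exact absurd h (ne_of_gt hpos)
        · exact h
    obtain ⟨hMu, hDu⟩ := shared hgr0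
    refine ⟨?_, hDu⟩
    rw [Matrix.add_mulVec, hMu, add_zero] at hFu
    exact hFu
  · -- easy direction
    rintro ⟨hγu, hDu⟩
    have hdot : star u ⬝ᵥ ((Matrix.of fun j k => ∫ t, d t j k ∂τ :
        Matrix (Fin q) (Fin q) ℂ) *ᵥ u) = ∫ t, (1:ℂ) * g t ∂τ := by
      rw [hDeq]
      exact aux_dot τ d (fun _ => 1) u h_1d
    rw [hDu] at hdot
    simp only [dotProduct_zero] at hdot
    have hint0 : ∫ t, gr t ∂τ = 0 := by
      have h2 : (fun t => (1:ℂ) * g t) = fun t => ((gr t : ℝ) : ℂ) := by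
        funext t; rw [one_mul, hgre t]
      rw [h2] at hdot
      have h3 : (∫ t, ((gr t : ℝ) : ℂ) ∂τ) = ((∫ t, gr t ∂τ : ℝ) : ℂ) := integral_ofReal
      rw [h3] at hdot
      exact_mod_cast hdot.symm
    have hgr0 : ∀ᵐ t ∂τ, gr t = 0 :=
      (integral_eq_zero_iff_of_nonneg_ae (Eventually.of_forall hgrnn) hgr_int).mp hint0
    obtain ⟨hMu, _⟩ := shared hgr0
    rw [Matrix.add_mulVec, hγu, hMu, add_zero]

theorem stmt14 {q : ℕ} (α : ℝ) (γ : Matrix (Fin q) (Fin q) ℂ) (hγ : γ.PosSemidef)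
    (τ : Measure ℝ) [IsFiniteMeasure τ] (hτ : τ (Set.Iio α) = 0)
    (d : ℝ → Matrix (Fin q) (Fin q) ℂ)
    (hdmeas : ∀ j k : Fin q, Measurable fun t => d t j k)
    (hdpsd : ∀ t, (d t).PosSemidef)
    (hdint : ∀ j k, Integrable (fun t => d t j k) τ)
    (F : ℂ → Matrix (Fin q) (Fin q) ℂ)
    (hF : ∀ z : ℂ, (∀ t : ℝ, α ≤ t → z ≠ (t : ℂ)) →
      F z = γ + Matrix.of fun j k =>
        ∫ t, ((1 + t - α : ℝ) : ℂ) / ((t : ℂ) - z) * d t j k ∂τ) :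
    (∀ z : ℂ, (∀ t : ℝ, α ≤ t → z ≠ (t : ℂ)) →
      (F z)ᴴ = F (starRingEnd ℂ z)
      ∧ LinearMap.ker (F z).mulVecLin =
          LinearMap.ker γ.mulVecLin ⊓
            LinearMap.ker (Matrix.of fun j k => ∫ t, d t j k ∂τ :
              Matrix (Fin q) (Fin q) ℂ).mulVecLin)
    ∧ (∀ z w : ℂ, (∀ t : ℝ, α ≤ t → z ≠ (t : ℂ)) → (∀ t : ℝ, α ≤ t → w ≠ (t : ℂ)) →
        LinearMap.ker (F z).mulVecLin = LinearMap.ker (F w).mulVecLin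
        ∧ LinearMap.range (F z).mulVecLin = LinearMap.range (F w).mulVecLin) := by
  have hcond : ∀ z : ℂ, (∀ t : ℝ, α ≤ t → z ≠ (t : ℂ)) →
      (∀ t : ℝ, α ≤ t → starRingEnd ℂ z ≠ (t : ℂ)) := by
    intro z hz t ht h
    apply hz t ht
    have h2 := congrArg (starRingEnd ℂ) h
    rwa [Complex.conj_conj, Complex.conj_ofReal] at h2
  have herm : ∀ z : ℂ, (∀ t : ℝ, α ≤ t → z ≠ (t : ℂ)) → (F z)ᴴ = F (starRingEnd ℂ z) := by
    intro z hz
    rw [hF z hz, hF _ (hcond z hz), Matrix.conjTranspose_add, hγ.1]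
    congr 1
    ext j k
    rw [Matrix.conjTranspose_apply, Matrix.of_apply, Matrix.of_apply]
    have h1 : star (∫ t, ((1 + t - α : ℝ) : ℂ) / ((t:ℂ) - z) * d t k j ∂τ)
        = ∫ t, (starRingEnd ℂ) (((1 + t - α : ℝ) : ℂ) / ((t:ℂ) - z) * d t k j) ∂τ :=
      integral_conj.symm
    rw [h1]
    congr 1
    funext t
    rw [_root_.map_mul]
    have hd : (starRingEnd ℂ) (d t k j) = d t j k := by
      conv_rhs => rw [← (hdpsd t).1]
      rw [Matrix.conjTranspose_apply]
      rfl
    rw [hd]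
    congr 1
    rw [map_div₀, map_sub, Complex.conj_ofReal, Complex.conj_ofReal]
  have key : ∀ z : ℂ, (∀ t : ℝ, α ≤ t → z ≠ (t : ℂ)) →
      LinearMap.ker (F z).mulVecLin =
        LinearMap.ker γ.mulVecLin ⊓
          LinearMap.ker (Matrix.of fun j k => ∫ t, d t j k ∂τ :
            Matrix (Fin q) (Fin q) ℂ).mulVecLin := by
    intro z hz
    rw [hF z hz]
    exact aux_ker α γ hγ τ hτ d hdmeas hdpsd hdint z hz
  refine ⟨fun z hz => ⟨herm z hz, key z hz⟩, fun z w hz hw =>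
    ⟨by rw [key z hz, key w hw], ?_⟩⟩
  apply aux_range_of_ker
  rw [herm z hz, herm w hw, key _ (hcond z hz), key _ (hcond w hw)]
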